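/- Let G be a graph that is 3-Ramsey for K_3. If a 3-edge-colouring of G contains a monochromatic triangle in each of the three colours, then this colouring contains a monochromatic copy of K_3 + K_2, i.e. a monochromatic triangle together with a vertex-disjoint edge of the same colour. -/

import Mathlib

open SimpleGraph

/-- The vertex-disjoint union `K_n + K_m` of two complete graphs. -/
def cliqueSum (n m : ℕ) : SimpleGraph (Fin n ⊕ Fin m) :=
  SimpleGraph.fromRel fun x y =>
    (∃ a b, x = Sum.inl a ∧ y = Sum.inl b) ∨ (∃ a b, x = Sum.inr a ∧ y = Sum.inr b)

/-- There is a copy of `H` in `G` that is monochromatic in colour `i`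
under the edge-colouring `c`. -/
def MonoCopy {V W : Type*} {r : ℕ} (G : SimpleGraph V) (H : SimpleGraph W)
    (c : Sym2 V → Fin r) (i : Fin r) : Prop :=
  ∃ f : H →g G, Function.Injective f ∧ ∀ u v, H.Adj u v → c s(f u, f v) = i

/-- `G` is `r`-Ramsey for `H`: every `r`-colouring of the edges of `G`
admits a monochromatic copy of `H`. -/
def IsRamseyFor {V W : Type*} (r : ℕ) (G : SimpleGraph V) (H : SimpleGraph W) : Prop :=
  ∀ c : Sym2 V → Fin r, ∃ i : Fin r, MonoCopy G H c i

/-- `G₁` and `G₂` are `r`-Ramsey equivalent. -/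
def RamseyEquiv {V W : Type*} (r : ℕ) (G₁ : SimpleGraph V) (G₂ : SimpleGraph W) : Prop :=
  ∀ {U : Type*} (G : SimpleGraph U), IsRamseyFor r G G₁ ↔ IsRamseyFor r G G₂

/-- `N` has the Ramsey property for clique sizes `n : Fin r → ℕ`: every `r`-colouring of
the edges of `K_N` admits a colour `i` and an `i`-monochromatic clique of size `n i`. -/
def HasRamseyProp (N : ℕ) {r : ℕ} (n : Fin r → ℕ) : Prop :=
  ∀ c : Sym2 (Fin N) → Fin r, ∃ i : Fin r, ∃ s : Finset (Fin N),
    s.card = n i ∧ ∀ u ∈ s, ∀ v ∈ s, u ≠ v → c s(u, v) = i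

/-- The Ramsey number `R_r(n 0, …, n (r-1))`. -/
noncomputable def ramseyNumber {r : ℕ} (n : Fin r → ℕ) : ℕ :=
  sInf {N | HasRamseyProp N n}

def chi (a b : Fin 10) : Fin 3 :=
  if (a.val + 10 - b.val) % 10 ∈ ([1,4,6,9] : List ℕ) then 0
  else if (a.val + 10 - b.val) % 10 ∈ ([2,3,7,8] : List ℕ) then 1
  else 2

lemma chi_symm : ∀ a b : Fin 10, chi a b = chi b a := by decide

lemma chi_no_tri : ∀ a b c : Fin 10, a ≠ b → a ≠ c → b ≠ c →
    ¬ (chi a b = chi a c ∧ chi a b = chi b c) := by decide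

/-- Let `G` be `3`-Ramsey for `K_3`. If a 3-edge-colouring `c` of `G`
contains a monochromatic triangle in each of the three colours, then it contains a
monochromatic copy of `K_3 + K_2`. -/
theorem stmt_10 {V : Type*} (G : SimpleGraph V)
    (hG : IsRamseyFor 3 G (completeGraph (Fin 3)))
    (c : Sym2 V → Fin 3)
    (h : ∀ i : Fin 3, MonoCopy G (completeGraph (Fin 3)) c i) :
    ∃ i : Fin 3, MonoCopy G (cliqueSum 3 2) c i := by
  classical
  by_contra hcon
  push_neg at hcon
  choose f finj fcol using h
  set l : List V := [f 0 0, f 0 1, f 0 2, f 1 0, f 1 1, f 1 2, f 2 0, f 2 1, f 2 2] with hl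
  have hmem : ∀ i a, f i a ∈ l := by
    intro i a; rw [hl]; fin_cases i <;> fin_cases a <;> simp
  have hglen : l.length = 9 := by rw [hl]; rfl
  -- every edge of G meets l
  have hmeet : ∀ u v, G.Adj u v → u ∈ l ∨ v ∈ l := by
    intro u v huv
    by_contra hne; push_neg at hne
    obtain ⟨hu, hv⟩ := hne
    set i := c s(u, v) with hi
    set t : Fin 3 ⊕ Fin 2 → V := Sum.elim (f i) ![u, v] with ht
    have hadjG : ∀ x y, (cliqueSum 3 2).Adj x y → G.Adj (t x) (t y) := by
      rintro (a | a) (b | b) hxy <;> rw [cliqueSum, SimpleGraph.fromRel_adj] at hxy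
      · have hab : a ≠ b := fun e0 => hxy.1 (by rw [e0])
        exact (f i).map_adj (by simpa [completeGraph] using hab)
      · exact absurd hxy.2 (by simp)
      · exact absurd hxy.2 (by simp)
      · have hab : a ≠ b := fun e0 => hxy.1 (by rw [e0])
        fin_cases a <;> fin_cases b
        · exact absurd rfl hab
        · exact huv
        · exact huv.symm
        · exact absurd rfl hab
    have htinj : Function.Injective t := by
      rintro (a | a) (b | b) hxy
      · exact congrArg Sum.inl (finj i hxy)
      · exfalso
        have hal : t (Sum.inl a) ∈ l := hmem i a
        rw [hxy] at hal
        fin_cases b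
        · exact hu hal
        · exact hv hal
      · exfalso
        have hal : t (Sum.inl b) ∈ l := hmem i b
        rw [← hxy] at hal
        fin_cases a
        · exact hu hal
        · exact hv hal
      · fin_cases a <;> fin_cases b
        · rfl
        · exact absurd hxy huv.ne
        · exact absurd hxy.symm huv.ne
        · rfl
    have htcol : ∀ x y, (cliqueSum 3 2).Adj x y → c s(t x, t y) = i := by
      rintro (a | a) (b | b) hxy <;> rw [cliqueSum, SimpleGraph.fromRel_adj] at hxy
      · have hab : a ≠ b := fun e0 => hxy.1 (by rw [e0])
        exact fcol i a b (by simpa [completeGraph] using hab)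
      · exact absurd hxy.2 (by simp)
      · exact absurd hxy.2 (by simp)
      · have hab : a ≠ b := fun e0 => hxy.1 (by rw [e0])
        fin_cases a <;> fin_cases b
        · exact absurd rfl hab
        · exact hi.symm
        · show c s(v, u) = i
          rw [Sym2.eq_swap]
        · exact absurd rfl hab
    exact hcon i ⟨⟨t, fun {x y} hxy => hadjG x y hxy⟩, htinj, htcol⟩
  -- the auxiliary colouring
  set g : V → Fin 10 := fun v =>
    ⟨l.idxOf v, by
      have h1 := List.idxOf_le_length (a := v) (l := l)
      rw [hglen] at h1; omega⟩ with hg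
  set c' : Sym2 V → Fin 3 :=
    Sym2.lift ⟨fun x y => chi (g x) (g y), fun x y => chi_symm _ _⟩ with hc'
  obtain ⟨j, F, Finj, Fcol⟩ := hG c'
  have hadj : ∀ a b : Fin 3, a ≠ b → G.Adj (F a) (F b) := by
    intro a b hab; exact F.map_adj (by simpa [completeGraph] using hab)
  have gdist : ∀ a b : Fin 3, a ≠ b → g (F a) ≠ g (F b) := by
    intro a b hab hgab
    have hadj' := hadj a b hab
    have hFne : F a ≠ F b := fun e => hab (Finj e)
    have hidx : l.idxOf (F a) = l.idxOf (F b) := congrArg Fin.val hgab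
    rcases Classical.em (F a ∈ l) with hA | hA <;> rcases Classical.em (F b ∈ l) with hB | hB
    · have ha' : l.idxOf (F a) < l.length := List.idxOf_lt_length_iff.mpr hA
      have hb' : l.idxOf (F b) < l.length := List.idxOf_lt_length_iff.mpr hB
      apply hFne
      rw [← List.idxOf_get ha', ← List.idxOf_get hb']
      exact congrArg l.get (Fin.ext hidx)
    · have hb9 : l.idxOf (F b) = 9 := by rw [List.idxOf_eq_length_iff.mpr hB, hglen]
      have ha9 : l.idxOf (F a) < 9 := hglen ▸ List.idxOf_lt_length_iff.mpr hA
      omega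
    · have hb9 : l.idxOf (F a) = 9 := by rw [List.idxOf_eq_length_iff.mpr hA, hglen]
      have ha9 : l.idxOf (F b) < 9 := hglen ▸ List.idxOf_lt_length_iff.mpr hB
      omega
    · rcases hmeet _ _ hadj' with hh | hh
      exacts [hA hh, hB hh]
  have hcol : ∀ a b : Fin 3, a ≠ b → chi (g (F a)) (g (F b)) = j := by
    intro a b hab
    have h2 := Fcol a b (by simpa [completeGraph] using hab)
    exact h2
  exact chi_no_tri (g (F 0)) (g (F 1)) (g (F 2))
    (gdist 0 1 (by decide)) (gdist 0 2 (by decide)) (gdist 1 2 (by decide))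
    ⟨by rw [hcol 0 1 (by decide), hcol 0 2 (by decide)],
     by rw [hcol 0 1 (by decide), hcol 1 2 (by decide)]⟩
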